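/- Monotone upper bound via derivative: for the Gallager function E₀(ρ, Q, W), one has ∂E₀(ρ,Q,W)/∂ρ ≤ I(X;Y) for all ρ ∈ [0,1], and consequently E₀(ρ,Q,W) ≤ ρ · I(X;Y) for all ρ ∈ [0,1]. -/

import Mathlib

open Finset

/-- The Gallager function (natural logarithm). -/
noncomputable def gallagerE0 {X Y : Type*} [Fintype X] [Fintype Y]
    (Q : X → ℝ) (W : X → Y → ℝ) (ρ : ℝ) : ℝ :=
  -Real.log (∑ y : Y, (∑ x : X, Q x * W x y ^ (1 / (1 + ρ))) ^ (1 + ρ))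

/-- Mutual information `I(X;Y)` under the joint pmf `Q(x)W(y|x)` (natural logarithm). -/
noncomputable def mutInfo {X Y : Type*} [Fintype X] [Fintype Y]
    (Q : X → ℝ) (W : X → Y → ℝ) : ℝ :=
  ∑ x : X, ∑ y : Y, Q x * W x y * Real.log (W x y / ∑ x' : X, Q x' * W x' y)

set_option linter.unusedSectionVars false
set_option linter.unusedVariables false

/-- Gibbs' inequality. -/
lemma gibbs_ineq {ι : Type*} (t : Finset ι) (p a : ι → ℝ)
    (hp : ∀ i ∈ t, 0 ≤ p i) (hps : ∑ i ∈ t, p i = 1)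
    (ha0 : ∀ i ∈ t, 0 ≤ a i) (ha : ∀ i ∈ t, p i ≠ 0 → 0 < a i) :
    ∑ i ∈ t, p i * Real.log (a i / p i) ≤ Real.log (∑ i ∈ t, a i) := by
  classical
  set t' := t.filter (fun i => p i ≠ 0) with ht'
  have hsub : t' ⊆ t := Finset.filter_subset _ _
  have hsum' : ∑ i ∈ t', p i = 1 := by
    rw [ht', Finset.sum_filter_ne_zero, hps]
  have hLHS : ∑ i ∈ t, p i * Real.log (a i / p i)
      = ∑ i ∈ t', p i * Real.log (a i / p i) := by
    rw [ht']
    refine (Finset.sum_filter_of_ne ?_).symm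
    intro x hx h
    intro hpx
    exact h (by rw [hpx, zero_mul])
  have ht'ne : t'.Nonempty := by
    by_contra h
    rw [Finset.not_nonempty_iff_eq_empty] at h
    rw [h, Finset.sum_empty] at hsum'
    norm_num at hsum'
  obtain ⟨i0, hi0⟩ := ht'ne
  have hi0t : i0 ∈ t := hsub hi0
  have hpi0 : p i0 ≠ 0 := (Finset.mem_filter.mp hi0).2
  have hS : 0 < ∑ i ∈ t, a i :=
    Finset.sum_pos' ha0 ⟨i0, hi0t, ha i0 hi0t hpi0⟩
  set S := ∑ i ∈ t, a i with hSdef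
  have key : ∀ i ∈ t', p i * Real.log (a i / p i) ≤ a i / S - p i + p i * Real.log S := by
    intro i hi
    have hit : i ∈ t := hsub hi
    have hpi : 0 < p i := lt_of_le_of_ne (hp i hit) (Ne.symm (Finset.mem_filter.mp hi).2)
    have hai : 0 < a i := ha i hit (Finset.mem_filter.mp hi).2
    have h1 : Real.log (a i / (p i * S)) ≤ a i / (p i * S) - 1 :=
      Real.log_le_sub_one_of_pos (by positivity)
    have h2 : Real.log (a i / p i) = Real.log (a i / (p i * S)) + Real.log S := by
      rw [← Real.log_mul (by positivity) hS.ne']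
      congr 1
      field_simp
    rw [h2]
    have h3 : p i * Real.log (a i / (p i * S)) ≤ p i * (a i / (p i * S) - 1) :=
      mul_le_mul_of_nonneg_left h1 hpi.le
    have h4 : p i * (a i / (p i * S) - 1) = a i / S - p i := by
      field_simp
    nlinarith [h3, h4]
  have hsumle : ∑ i ∈ t', (a i / S - p i + p i * Real.log S)
      = (∑ i ∈ t', a i) / S - 1 + Real.log S := by
    rw [Finset.sum_add_distrib, Finset.sum_sub_distrib, ← Finset.sum_mul, hsum',
      ← Finset.sum_div, one_mul]
  have hfin : (∑ i ∈ t', a i) / S ≤ 1 := by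
    rw [div_le_one hS]
    exact Finset.sum_le_sum_of_subset_of_nonneg hsub (fun i hi _ => ha0 i hi)
  calc ∑ i ∈ t, p i * Real.log (a i / p i)
      = ∑ i ∈ t', p i * Real.log (a i / p i) := hLHS
    _ ≤ ∑ i ∈ t', (a i / S - p i + p i * Real.log S) := Finset.sum_le_sum key
    _ = (∑ i ∈ t', a i) / S - 1 + Real.log S := hsumle
    _ ≤ Real.log S := by linarith

section Aux

variable {X Y : Type*} [Fintype X] [Fintype Y]

/-- Exponential form of the inner Gallager sum. -/
noncomputable def Bf (Q : X → ℝ) (W : X → Y → ℝ) (ρ : ℝ) (y : Y) : ℝ :=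
  ∑ x, Q x * Real.exp (Real.log (W x y) * (1 / (1 + ρ)))

/-- Exponential form of the Gallager sum. -/
noncomputable def Af (Q : X → ℝ) (W : X → Y → ℝ) (ρ : ℝ) : ℝ :=
  ∑ y, Real.exp ((1 + ρ) * Real.log (Bf Q W ρ y))

noncomputable def pf (Q : X → ℝ) (W : X → Y → ℝ) (ρ0 : ℝ) (y : Y) : ℝ :=
  Real.exp ((1 + ρ0) * Real.log (Bf Q W ρ0 y)) / Af Q W ρ0

noncomputable def rf (Q : X → ℝ) (W : X → Y → ℝ) (ρ0 : ℝ) (x : X) (y : Y) : ℝ :=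
  Q x * Real.exp (Real.log (W x y) * (1 / (1 + ρ0))) / Bf Q W ρ0 y

noncomputable def Lb (Q : X → ℝ) (W : X → Y → ℝ) (ρ0 : ℝ) (y : Y) : ℝ :=
  ∑ x, rf Q W ρ0 x y * Real.log (W x y)

noncomputable def Kf (Q : X → ℝ) (W : X → Y → ℝ) (ρ0 : ℝ) : ℝ :=
  ∑ y, pf Q W ρ0 y * (Real.log (Bf Q W ρ0 y) - Lb Q W ρ0 y / (1 + ρ0))

noncomputable def Cf (Q : X → ℝ) (W : X → Y → ℝ) (ρ0 : ℝ) : ℝ :=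
  ∑ y, pf Q W ρ0 y *
    (Real.log (Bf Q W ρ0 y) + (ρ0 / (1 + ρ0)) * Lb Q W ρ0 y - Real.log (pf Q W ρ0 y))

variable {Q : X → ℝ} {W : X → Y → ℝ}

lemma exists_Q_pos (hQ : ∀ x, 0 ≤ Q x) (hQsum : ∑ x, Q x = 1) : ∃ x, 0 < Q x := by
  by_contra h
  push_neg at h
  have : ∑ x, Q x = 0 := Finset.sum_eq_zero fun x _ => le_antisymm (h x) (hQ x)
  rw [hQsum] at this; norm_num at this

lemma Bf_pos (hQ : ∀ x, 0 ≤ Q x) (hQsum : ∑ x, Q x = 1) (ρ : ℝ) (y : Y) :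
    0 < Bf Q W ρ y := by
  obtain ⟨x0, hx0⟩ := exists_Q_pos hQ hQsum
  refine Finset.sum_pos' (fun x _ => ?_) ⟨x0, Finset.mem_univ x0, ?_⟩
  · have := hQ x; positivity
  · positivity

lemma Af_pos [Nonempty Y] (Q : X → ℝ) (W : X → Y → ℝ) (ρ : ℝ) : 0 < Af Q W ρ :=
  Finset.sum_pos (fun y _ => Real.exp_pos _) Finset.univ_nonempty

lemma pf_pos [Nonempty Y] (ρ0 : ℝ) (y : Y) : 0 < pf Q W ρ0 y :=
  div_pos (Real.exp_pos _) (Af_pos Q W ρ0)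

lemma sum_pf [Nonempty Y] (ρ0 : ℝ) : ∑ y, pf Q W ρ0 y = 1 := by
  unfold pf
  rw [← Finset.sum_div]
  exact div_self (Af_pos Q W ρ0).ne'

lemma rf_nonneg (hQ : ∀ x, 0 ≤ Q x) (hQsum : ∑ x, Q x = 1) (ρ0 : ℝ) (x : X) (y : Y) :
    0 ≤ rf Q W ρ0 x y := by
  have := Bf_pos (W := W) hQ hQsum ρ0 y
  have := hQ x
  unfold rf; positivity

lemma sum_rf (hQ : ∀ x, 0 ≤ Q x) (hQsum : ∑ x, Q x = 1) (ρ0 : ℝ) (y : Y) :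
    ∑ x, rf Q W ρ0 x y = 1 := by
  unfold rf
  rw [← Finset.sum_div]
  exact div_self (Bf_pos hQ hQsum ρ0 y).ne'

end Aux

section Main
variable {X Y : Type*} [Fintype X] [Fintype Y] {Q : X → ℝ} {W : X → Y → ℝ}

/-- Inner tangent bound via Gibbs. -/
lemma inner_tangent (hQ : ∀ x, 0 ≤ Q x) (hQsum : ∑ x, Q x = 1) {ρ0 ρ : ℝ} (y : Y) :
    Real.log (Bf Q W ρ0 y) + (1 / (1 + ρ) - 1 / (1 + ρ0)) * Lb Q W ρ0 y
      ≤ Real.log (Bf Q W ρ y) := by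
  have hB0 := Bf_pos (W := W) hQ hQsum ρ0 y
  have hgibbs := gibbs_ineq Finset.univ (fun x => rf Q W ρ0 x y)
      (fun x => Q x * Real.exp (Real.log (W x y) * (1 / (1 + ρ))))
      (fun x _ => rf_nonneg hQ hQsum ρ0 x y) (sum_rf hQ hQsum ρ0 y)
      (fun x _ => by have := hQ x; positivity)
      (fun x _ hx => by
        have hQx : Q x ≠ 0 := fun h => hx (by simp [rf, h])
        have : 0 < Q x := lt_of_le_of_ne (hQ x) (Ne.symm hQx)
        positivity)
  have hre : ∀ x : X,
      rf Q W ρ0 x y * Real.log ((Q x * Real.exp (Real.log (W x y) * (1 / (1 + ρ)))) / rf Q W ρ0 x y)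
      = rf Q W ρ0 x y * (Real.log (W x y) * (1 / (1 + ρ) - 1 / (1 + ρ0)) + Real.log (Bf Q W ρ0 y)) := by
    intro x
    rcases eq_or_ne (Q x) 0 with hQx | hQx
    · unfold rf; rw [hQx]; ring_nf
    · have hQxp : 0 < Q x := lt_of_le_of_ne (hQ x) (Ne.symm hQx)
      congr 1
      unfold rf
      rw [div_div_eq_mul_div, mul_assoc, mul_div_mul_left _ _ hQx,
        Real.log_div (by positivity) (Real.exp_ne_zero _),
        Real.log_mul (Real.exp_ne_zero _) hB0.ne', Real.log_exp, Real.log_exp]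
      ring
  rw [Finset.sum_congr rfl (fun x _ => hre x)] at hgibbs
  have hsplit : ∑ x : X, rf Q W ρ0 x y *
      (Real.log (W x y) * (1 / (1 + ρ) - 1 / (1 + ρ0)) + Real.log (Bf Q W ρ0 y))
      = (1 / (1 + ρ) - 1 / (1 + ρ0)) * Lb Q W ρ0 y
        + (∑ x, rf Q W ρ0 x y) * Real.log (Bf Q W ρ0 y) := by
    rw [Finset.sum_mul, Lb.eq_1, Finset.mul_sum]
    rw [← Finset.sum_add_distrib]
    refine Finset.sum_congr rfl fun x _ => by ring
  rw [hsplit, sum_rf hQ hQsum ρ0 y, one_mul] at hgibbs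
  have : (∑ i : X, Q i * Real.exp (Real.log (W i y) * (1 / (1 + ρ)))) = Bf Q W ρ y := rfl
  rw [this] at hgibbs
  linarith
end Main

section Main2
variable {X Y : Type*} [Fintype X] [Fintype Y] {Q : X → ℝ} {W : X → Y → ℝ}

lemma tangent_le [Nonempty Y] (hQ : ∀ x, 0 ≤ Q x) (hQsum : ∑ x, Q x = 1)
    {ρ0 ρ : ℝ} (h0 : 0 < 1 + ρ0) (h : 0 < 1 + ρ) :
    Cf Q W ρ0 + Kf Q W ρ0 * ρ ≤ Real.log (Af Q W ρ) := by
  have houter := gibbs_ineq Finset.univ (pf Q W ρ0)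
      (fun y => Real.exp ((1 + ρ) * Real.log (Bf Q W ρ y)))
      (fun y _ => (pf_pos ρ0 y).le) (sum_pf ρ0)
      (fun y _ => (Real.exp_pos _).le) (fun y _ _ => Real.exp_pos _)
  have halg : Cf Q W ρ0 + Kf Q W ρ0 * ρ
      = ∑ y, pf Q W ρ0 y * ((1 + ρ) * (Real.log (Bf Q W ρ0 y)
          + (1 / (1 + ρ) - 1 / (1 + ρ0)) * Lb Q W ρ0 y) - Real.log (pf Q W ρ0 y)) := by
    unfold Cf Kf
    rw [Finset.sum_mul, ← Finset.sum_add_distrib]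
    refine Finset.sum_congr rfl fun y _ => ?_
    field_simp
    ring
  have hstep : ∀ y : Y, pf Q W ρ0 y * ((1 + ρ) * (Real.log (Bf Q W ρ0 y)
          + (1 / (1 + ρ) - 1 / (1 + ρ0)) * Lb Q W ρ0 y) - Real.log (pf Q W ρ0 y))
      ≤ pf Q W ρ0 y * Real.log
          (Real.exp ((1 + ρ) * Real.log (Bf Q W ρ y)) / pf Q W ρ0 y) := by
    intro y
    have hinner := inner_tangent (W := W) hQ hQsum (ρ0 := ρ0) (ρ := ρ) y
    have h2 : Real.log (Real.exp ((1 + ρ) * Real.log (Bf Q W ρ y)) / pf Q W ρ0 y)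
        = (1 + ρ) * Real.log (Bf Q W ρ y) - Real.log (pf Q W ρ0 y) := by
      rw [Real.log_div (Real.exp_ne_zero _) (pf_pos ρ0 y).ne', Real.log_exp]
    rw [h2]
    have h3 : (1 + ρ) * (Real.log (Bf Q W ρ0 y)
          + (1 / (1 + ρ) - 1 / (1 + ρ0)) * Lb Q W ρ0 y)
        ≤ (1 + ρ) * Real.log (Bf Q W ρ y) :=
      mul_le_mul_of_nonneg_left (by linarith) h.le
    exact mul_le_mul_of_nonneg_left (by linarith) (pf_pos ρ0 y).le
  calc Cf Q W ρ0 + Kf Q W ρ0 * ρ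
      = _ := halg
    _ ≤ ∑ y, pf Q W ρ0 y * Real.log
          (Real.exp ((1 + ρ) * Real.log (Bf Q W ρ y)) / pf Q W ρ0 y) :=
        Finset.sum_le_sum fun y _ => hstep y
    _ ≤ Real.log (∑ y, Real.exp ((1 + ρ) * Real.log (Bf Q W ρ y))) := houter
    _ = Real.log (Af Q W ρ) := rfl

lemma tangent_eq [Nonempty Y] {ρ0 : ℝ} :
    Cf Q W ρ0 + Kf Q W ρ0 * ρ0 = Real.log (Af Q W ρ0) := by
  unfold Cf Kf
  rw [Finset.sum_mul, ← Finset.sum_add_distrib]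
  have hterm : ∀ y : Y, pf Q W ρ0 y * (Real.log (Bf Q W ρ0 y)
        + ρ0 / (1 + ρ0) * Lb Q W ρ0 y - Real.log (pf Q W ρ0 y))
      + pf Q W ρ0 y * (Real.log (Bf Q W ρ0 y) - Lb Q W ρ0 y / (1 + ρ0)) * ρ0
      = pf Q W ρ0 y * Real.log (Af Q W ρ0) := by
    intro y
    have hlogp : Real.log (pf Q W ρ0 y)
        = (1 + ρ0) * Real.log (Bf Q W ρ0 y) - Real.log (Af Q W ρ0) := by
      unfold pf
      rw [Real.log_div (Real.exp_ne_zero _) (Af_pos Q W ρ0).ne', Real.log_exp]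
    rw [hlogp]
    field_simp
    ring
  rw [Finset.sum_congr rfl fun y _ => hterm y, ← Finset.sum_mul, sum_pf ρ0, one_mul]

lemma Bf_zero (hW : ∀ x y, 0 < W x y) (y : Y) :
    Bf Q W 0 y = ∑ x, Q x * W x y := by
  unfold Bf
  refine Finset.sum_congr rfl fun x _ => ?_
  norm_num [Real.exp_log (hW x y)]

lemma Af_zero (hQ : ∀ x, 0 ≤ Q x) (hQsum : ∑ x, Q x = 1)
    (hW : ∀ x y, 0 < W x y) (hWsum : ∀ x, ∑ y, W x y = 1) :
    Af Q W 0 = 1 := by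
  unfold Af
  have h1 : ∀ y : Y, Real.exp ((1 + 0) * Real.log (Bf Q W 0 y)) = ∑ x, Q x * W x y := by
    intro y
    rw [← Bf_zero hW y]
    norm_num [Real.exp_log (Bf_pos hQ hQsum 0 y)]
  rw [Finset.sum_congr rfl fun y _ => h1 y, Finset.sum_comm]
  calc ∑ x, ∑ y, Q x * W x y = ∑ x, Q x * ∑ y, W x y := by
        refine Finset.sum_congr rfl fun x _ => (Finset.mul_sum _ _ _).symm
    _ = 1 := by
        rw [Finset.sum_congr rfl fun x _ => by rw [hWsum x, mul_one]]
        exact hQsum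

lemma Kf_zero [Nonempty Y] (hQ : ∀ x, 0 ≤ Q x) (hQsum : ∑ x, Q x = 1)
    (hW : ∀ x y, 0 < W x y) (hWsum : ∀ x, ∑ y, W x y = 1) :
    Kf Q W 0 = -mutInfo Q W := by
  have hP : ∀ y : Y, 0 < ∑ x, Q x * W x y := by
    intro y
    rw [← Bf_zero (Q := Q) hW y]
    exact Bf_pos hQ hQsum 0 y
  have hpf0 : ∀ y : Y, pf Q W 0 y = ∑ x, Q x * W x y := by
    intro y
    unfold pf
    rw [Af_zero hQ hQsum hW hWsum, div_one, ← Bf_zero (Q := Q) hW y]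
    norm_num [Real.exp_log (Bf_pos hQ hQsum 0 y)]
  have hrf0 : ∀ (x : X) (y : Y), rf Q W 0 x y = Q x * W x y / ∑ x', Q x' * W x' y := by
    intro x y
    unfold rf
    rw [← Bf_zero (Q := Q) hW y]
    norm_num [Real.exp_log (hW x y)]
  have hmut : mutInfo Q W = ∑ y, ((∑ x, Q x * W x y * Real.log (W x y))
      - (∑ x, Q x * W x y) * Real.log (∑ x', Q x' * W x' y)) := by
    unfold mutInfo
    rw [Finset.sum_comm]
    refine Finset.sum_congr rfl fun y _ => ?_
    rw [Finset.sum_mul, ← Finset.sum_sub_distrib]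
    refine Finset.sum_congr rfl fun x _ => ?_
    rw [Real.log_div (hW x y).ne' (hP y).ne']
    ring
  unfold Kf Lb
  rw [hmut, ← Finset.sum_neg_distrib]
  refine Finset.sum_congr rfl fun y _ => ?_
  have e1 : (∑ x, rf Q W 0 x y * Real.log (W x y))
      = (∑ x, Q x * W x y * Real.log (W x y)) / (∑ x', Q x' * W x' y) := by
    rw [Finset.sum_div]
    refine Finset.sum_congr rfl fun x _ => ?_
    rw [hrf0 x y, div_mul_eq_mul_div]
  rw [e1, hpf0 y, Bf_zero (Q := Q) hW y]
  have hPy := (hP y).ne'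
  field_simp
  ring

lemma gallager_eq (hQ : ∀ x, 0 ≤ Q x) (hQsum : ∑ x, Q x = 1)
    (hW : ∀ x y, 0 < W x y) :
    gallagerE0 Q W = fun ρ => -Real.log (Af Q W ρ) := by
  funext ρ
  unfold gallagerE0 Af
  congr 1
  congr 1
  refine Finset.sum_congr rfl fun y _ => ?_
  have hB : (∑ x, Q x * W x y ^ (1 / (1 + ρ))) = Bf Q W ρ y := by
    refine Finset.sum_congr rfl fun x _ => ?_
    rw [Real.rpow_def_of_pos (hW x y)]
  rw [hB, Real.rpow_def_of_pos (Bf_pos hQ hQsum ρ y), mul_comm]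

lemma diff_logAf [Nonempty Y] (hQ : ∀ x, 0 ≤ Q x) (hQsum : ∑ x, Q x = 1)
    {ρ0 : ℝ} (h0 : 1 + ρ0 ≠ 0) :
    DifferentiableAt ℝ (fun ρ => Real.log (Af Q W ρ)) ρ0 := by
  have h1 : DifferentiableAt ℝ (fun ρ : ℝ => 1 + ρ) ρ0 := by fun_prop
  have hBd : ∀ y : Y, DifferentiableAt ℝ (fun ρ => Bf Q W ρ y) ρ0 := by
    intro y
    refine DifferentiableAt.fun_sum fun x _ => ?_
    exact ((((differentiableAt_const (1:ℝ)).div h1 h0).const_mul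
      (Real.log (W x y))).exp.const_mul (Q x))
  have hAd : DifferentiableAt ℝ (fun ρ => Af Q W ρ) ρ0 :=
    DifferentiableAt.fun_sum fun y _ =>
      (h1.fun_mul ((hBd y).log (Bf_pos hQ hQsum ρ0 y).ne')).exp
  exact hAd.log (Af_pos Q W ρ0).ne'

end Main2

/-- Monotone upper bound via the derivative: `∂E₀(ρ,Q,W)/∂ρ ≤ I(X;Y)` for all
`ρ ∈ [0,1]`, and consequently `E₀(ρ,Q,W) ≤ ρ · I(X;Y)` for all `ρ ∈ [0,1]`. -/
theorem gallagerE0_le_rho_mutInfo {X Y : Type*} [Fintype X] [Fintype Y]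
    (Q : X → ℝ) (hQ : ∀ x, 0 ≤ Q x) (hQsum : ∑ x, Q x = 1)
    (W : X → Y → ℝ) (hW : ∀ x y, 0 < W x y) (hWsum : ∀ x, ∑ y, W x y = 1) :
    (∀ ρ ∈ Set.Icc (0 : ℝ) 1, deriv (gallagerE0 Q W) ρ ≤ mutInfo Q W) ∧
    (∀ ρ ∈ Set.Icc (0 : ℝ) 1, gallagerE0 Q W ρ ≤ ρ * mutInfo Q W) := by
  classical
  rcases isEmpty_or_nonempty Y with hY | hY
  · have hE : gallagerE0 Q W = fun _ => (0 : ℝ) := by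
      funext ρ
      unfold gallagerE0
      rw [Finset.univ_eq_empty, Finset.sum_empty, Real.log_zero, neg_zero]
    have hI : mutInfo Q W = 0 := by
      unfold mutInfo
      simp [Finset.univ_eq_empty (α := Y)]
    constructor <;> intro ρ hρ <;> rw [hE, hI] <;> simp
  · have hE : gallagerE0 Q W = fun ρ => -Real.log (Af Q W ρ) :=
      gallager_eq hQ hQsum hW
    have hC0 : Cf Q W 0 = 0 := by
      have h := tangent_eq (Q := Q) (W := W) (ρ0 := 0)
      rw [Af_zero hQ hQsum hW hWsum, Real.log_one, mul_zero, add_zero] at h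
      exact h
    have hK0 : Kf Q W 0 = -mutInfo Q W := Kf_zero hQ hQsum hW hWsum
    have hpart2 : ∀ ρ : ℝ, 0 ≤ ρ → -Real.log (Af Q W ρ) ≤ ρ * mutInfo Q W := by
      intro ρ hρ
      have ht := tangent_le (Q := Q) (W := W) hQ hQsum (ρ0 := 0) (ρ := ρ)
        (by norm_num) (by linarith)
      rw [hC0, hK0] at ht
      linarith
    refine ⟨?_, fun ρ hρ => by rw [hE]; exact hpart2 ρ hρ.1⟩
    intro ρ0 hρ0
    obtain ⟨hρ0l, hρ0r⟩ := hρ0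
    have h10 : (0 : ℝ) < 1 + ρ0 := by linarith
    have htan : ∀ ρ : ℝ, -1 < ρ →
        Cf Q W ρ0 + Kf Q W ρ0 * ρ ≤ Real.log (Af Q W ρ) := fun ρ h =>
      tangent_le hQ hQsum h10 (by linarith)
    have heq : Cf Q W ρ0 + Kf Q W ρ0 * ρ0 = Real.log (Af Q W ρ0) := tangent_eq
    have hdiff := diff_logAf (Q := Q) (W := W) hQ hQsum h10.ne'
    have hlin : HasDerivAt (fun ρ : ℝ => Cf Q W ρ0 + Kf Q W ρ0 * ρ)
        (Kf Q W ρ0) ρ0 := by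
      simpa using ((hasDerivAt_id ρ0).const_mul (Kf Q W ρ0)).const_add (Cf Q W ρ0)
    have hmin : IsLocalMin
        (fun ρ => Real.log (Af Q W ρ) - (Cf Q W ρ0 + Kf Q W ρ0 * ρ)) ρ0 := by
      filter_upwards [eventually_gt_nhds
        (show (-1 : ℝ) < ρ0 by linarith)] with ρ h
      have := htan ρ h
      show Real.log (Af Q W ρ0) - _ ≤ Real.log (Af Q W ρ) - _
      rw [← heq]
      linarith
    have hder0 : deriv
        (fun ρ => Real.log (Af Q W ρ) - (Cf Q W ρ0 + Kf Q W ρ0 * ρ)) ρ0 = 0 :=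
      hmin.deriv_eq_zero
    rw [deriv_fun_sub hdiff hlin.differentiableAt, hlin.deriv] at hder0
    have hderA : deriv (fun ρ => Real.log (Af Q W ρ)) ρ0 = Kf Q W ρ0 := by
      linarith
    have hderE : deriv (gallagerE0 Q W) ρ0 = -Kf Q W ρ0 := by
      rw [hE, deriv.fun_neg, hderA]
    rw [hderE]
    rcases eq_or_lt_of_le hρ0l with h0 | h0
    · rw [← h0] at *
      rw [hK0]
      simp
    · have hC : Cf Q W ρ0 ≤ 0 := by
        have h := htan 0 (by norm_num)
        rw [Af_zero hQ hQsum hW hWsum, Real.log_one, mul_zero] at h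
        linarith
      have hA : -(ρ0 * mutInfo Q W) ≤ Real.log (Af Q W ρ0) := by
        have := hpart2 ρ0 hρ0l
        linarith
      nlinarith [heq, hC, hA, h0]
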